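/- arXiv:1406.0209 — 3 statements merged into one kernel-verified Lean document; each statement's English description precedes it below -/
import Mathlib

section
/- Let Y : [0, T] → ℝ be a càdlàg path with Y(0) = 0, b : [0, T] → ℝ a càdlàg barrier, and ξ ≤ b(0). Define l(s) = sup_{0 ≤ r ≤ s} (ξ + Y(r) − b(r))⁺ and X̃(s) = ξ + Y(s) − l(s). Then: (i) X̃(s) ≤ b(s) for all s ∈ [0, T]; (ii) l is non-decreasing with l(0) = 0; (iii) l increases only when X̃ is at the barrier, i.e. ∫_0^T (b(s) − X̃(s)) dl(s) = 0 (the Lebesgue–Stieltjes integral vanishes). -/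
open Set MeasureTheory

/-- A function is càdlàg: right-continuous with left limits everywhere. -/
def Cadlag (f : ℝ → ℝ) : Prop :=
  (∀ t : ℝ, ContinuousWithinAt f (Set.Ici t) t) ∧
  (∀ t : ℝ, ∃ c : ℝ, Filter.Tendsto f (nhdsWithin t (Set.Iio t)) (nhds c))

/-- A càdlàg function is bounded above on compact sets. -/
lemma cadlag_bddAbove {f : ℝ → ℝ} (hf : Cadlag f) {K : Set ℝ} (hK : IsCompact K) :
    BddAbove (f '' K) := by
  have H : ∀ t : ℝ, ∃ M : ℝ, ∀ᶠ x in nhds t, f x < M := by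
    intro t
    obtain ⟨c, hc⟩ := hf.2 t
    have h1 : ∀ᶠ x in nhdsWithin t (Set.Ici t), f x < max (f t + 1) (c + 1) :=
      Filter.Tendsto.eventually_lt_const (lt_of_lt_of_le (lt_add_one _) (le_max_left _ _)) (hf.1 t)
    have h2 : ∀ᶠ x in nhdsWithin t (Set.Iio t), f x < max (f t + 1) (c + 1) :=
      Filter.Tendsto.eventually_lt_const (lt_of_lt_of_le (lt_add_one _) (le_max_right _ _)) hc
    refine ⟨max (f t + 1) (c + 1), ?_⟩
    rw [← nhdsLT_sup_nhdsGE (a := t), Filter.eventually_sup]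
    exact ⟨h2, h1⟩
  choose M hM using H
  obtain ⟨ts, -, hts⟩ := hK.elim_nhds_subcover (fun t => {x | f x < M t}) (fun x _ => hM x)
  rcases ts.eq_empty_or_nonempty with h | h
  · have hKe : K ⊆ ∅ := by simpa [h] using hts
    simp [Set.subset_empty_iff.mp hKe]
  · refine ⟨ts.sup' h M, ?_⟩
    rintro y ⟨x, hx, rfl⟩
    obtain ⟨t, htts, hxt⟩ := Set.mem_iUnion₂.mp (hts hx)
    exact le_trans (le_of_lt hxt) (Finset.le_sup' M htts)

theorem stmt_3 (T : ℝ) (hT : 0 ≤ T) (Y b : ℝ → ℝ)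
    (hY : Cadlag Y) (hY0 : Y 0 = 0) (hb : Cadlag b)
    (ξ : ℝ) (hξ : ξ ≤ b 0)
    (l : ℝ → ℝ)
    (hl : ∀ s, l s = sSup ((fun r => max (ξ + Y r - b r) 0) '' Set.Icc 0 s))
    (Xt : ℝ → ℝ) (hXt : ∀ s, Xt s = ξ + Y s - l s)
    -- `L` is the Lebesgue–Stieltjes extension of `l` to `ℝ`
    (L : StieltjesFunction ℝ) (hL : ∀ s ∈ Set.Icc 0 T, L s = l s) :
    (∀ s ∈ Set.Icc 0 T, Xt s ≤ b s) ∧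
    (MonotoneOn l (Set.Icc 0 T) ∧ l 0 = 0) ∧
    (∫ s in Set.Ioc (0 : ℝ) T, (b s - Xt s) ∂L.measure = 0) := by
  have hf : Cadlag (fun r => max (ξ + Y r - b r) 0) := by
    constructor
    · intro t
      exact ((continuousWithinAt_const.add (hY.1 t)).sub (hb.1 t)).max continuousWithinAt_const
    · intro t
      obtain ⟨cY, hcY⟩ := hY.2 t
      obtain ⟨cb, hcb⟩ := hb.2 t
      exact ⟨max (ξ + cY - cb) 0, ((tendsto_const_nhds.add hcY).sub hcb).max tendsto_const_nhds⟩
  set f : ℝ → ℝ := fun r => max (ξ + Y r - b r) 0 with hfdef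
  have hfeq : ∀ r, f r = max (ξ + Y r - b r) 0 := fun r => by rw [hfdef]
  have hBddT : BddAbove (f '' Set.Icc 0 T) := cadlag_bddAbove hf isCompact_Icc
  have hBdd : ∀ s : ℝ, s ≤ T → BddAbove (f '' Set.Icc 0 s) := fun s hs =>
    hBddT.mono (Set.image_mono (f := f) (Set.Icc_subset_Icc le_rfl hs))
  have hne : ∀ s : ℝ, 0 ≤ s → (f '' Set.Icc 0 s).Nonempty := fun s hs =>
    ⟨f 0, Set.mem_image_of_mem f (Set.left_mem_Icc.mpr hs)⟩
  have hfle : ∀ s r : ℝ, 0 ≤ r → r ≤ s → s ≤ T → f r ≤ l s := by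
    intro s r h0 hrs hsT
    rw [hl s]
    exact le_csSup (hBdd s hsT) (Set.mem_image_of_mem f ⟨h0, hrs⟩)
  have hlnn : ∀ s : ℝ, 0 ≤ s → s ≤ T → 0 ≤ l s := by
    intro s h0 hT'
    refine le_trans ?_ (hfle s 0 le_rfl h0 hT')
    rw [hfeq 0]
    exact le_max_right _ _
  have hlle : ∀ s : ℝ, 0 ≤ s → s ≤ T → ∀ M : ℝ, (∀ r, 0 ≤ r → r ≤ s → f r ≤ M) → l s ≤ M := by
    intro s h0 hT' M hM
    rw [hl s]
    refine csSup_le (hne s h0) ?_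
    rintro x ⟨r, ⟨hr0, hrs⟩, rfl⟩
    exact hM r hr0 hrs
  have hgfle : ∀ s : ℝ, ξ + Y s - b s ≤ f s := by
    intro s; rw [hfeq s]; exact le_max_left _ _
  -- Part (i)
  have hXle : ∀ s ∈ Set.Icc (0:ℝ) T, Xt s ≤ b s := by
    rintro s ⟨h0, hT'⟩
    have h1 : ξ + Y s - b s ≤ l s := le_trans (hgfle s) (hfle s s h0 le_rfl hT')
    rw [hXt s]; linarith
  -- Part (ii)
  have hmono : MonotoneOn l (Set.Icc 0 T) := by
    rintro s ⟨hs0, _⟩ t ⟨_, htT⟩ hst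
    rw [hl s, hl t]
    exact csSup_le_csSup (hBdd t htT) (hne s hs0)
      (Set.image_mono (f := f) (Set.Icc_subset_Icc le_rfl hst))
  have hl0 : l 0 = 0 := by
    rw [hl 0, Set.Icc_self, Set.image_singleton, csSup_singleton, hfeq 0, hY0]
    exact max_eq_right (by linarith)
  -- Part (iii)
  set μ := L.measure with hμ
  have hIoc : ∀ u v : ℝ, 0 ≤ u → u ≤ v → v ≤ T → μ (Set.Ioc u v) = ENNReal.ofReal (l v - l u) := by
    intro u v hu huv hv
    rw [hμ, StieltjesFunction.measure_Ioc, hL u ⟨hu, huv.trans hv⟩, hL v ⟨hu.trans huv, hv⟩]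
  -- singletons in the "off-barrier" set are null
  have hsing : ∀ s : ℝ, 0 < s → s ≤ T → ξ + Y s - b s < l s → μ {s} = 0 := by
    intro s hs0 hsT hgs
    have key : ∀ ε : ℝ, 0 < ε → μ {s} ≤ ENNReal.ofReal ε := by
      intro ε hε
      obtain ⟨s', hs'0, hs's, hls'⟩ : ∃ s' : ℝ, 0 ≤ s' ∧ s' < s ∧ l s - ε < l s' := by
        rcases le_or_gt (l s) 0 with hls | hls
        · exact ⟨0, le_rfl, hs0, by rw [hl0]; linarith⟩
        · set εm := min ε (min (l s - (ξ + Y s - b s)) (l s)) with hεm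
          have hεm0 : 0 < εm := lt_min hε (lt_min (by linarith) hls)
          have hεmε : εm ≤ ε := min_le_left _ _
          have hεm1 : εm ≤ l s - (ξ + Y s - b s) := (min_le_right _ _).trans (min_le_left _ _)
          have hεm2 : εm ≤ l s := (min_le_right _ _).trans (min_le_right _ _)
          have h1 : l s - εm < sSup (f '' Set.Icc 0 s) := by rw [← hl s]; linarith
          obtain ⟨x, ⟨r, ⟨hr0, hrs⟩, rfl⟩, hx⟩ := exists_lt_of_lt_csSup (hne s hs0.le) h1
          rcases lt_or_eq_of_le hrs with hlt | heq
          · refine ⟨r, hr0, hlt, ?_⟩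
            have h2 : f r ≤ l r := hfle r r hr0 le_rfl (hlt.le.trans hsT)
            linarith
          · exfalso
            rw [heq, hfeq s] at hx
            rcases le_or_gt (ξ + Y s - b s) 0 with h7 | h7
            · rw [max_eq_right h7] at hx; linarith
            · rw [max_eq_left h7.le] at hx; linarith
      have hsub : μ {s} ≤ μ (Set.Ioc s' s) := by
        refine measure_mono ?_
        intro x hx
        rw [Set.mem_singleton_iff] at hx
        subst hx
        exact ⟨hs's, le_rfl⟩
      rw [hIoc s' s hs'0 hs's.le hsT] at hsub
      exact hsub.trans (ENNReal.ofReal_le_ofReal (by linarith))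
    by_contra hne0
    have hlt1 : μ {s} ≤ ENNReal.ofReal 1 := key 1 one_pos
    have hfin : μ {s} ≠ ⊤ := ne_top_of_le_ne_top ENNReal.ofReal_ne_top hlt1
    have hpos : 0 < (μ {s}).toReal := ENNReal.toReal_pos hne0 hfin
    have h2 := key ((μ {s}).toReal / 2) (by linarith)
    have h3 : (μ {s}).toReal ≤ (μ {s}).toReal / 2 :=
      ENNReal.toReal_le_of_le_ofReal (by linarith) h2
    linarith
  -- right-continuity helper
  have hrc : ∀ t c : ℝ, ξ + Y t - b t < c →
      ∃ w, t < w ∧ ∀ r ∈ Set.Ico t w, ξ + Y r - b r < c := by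
    intro t c hc
    have hg : ContinuousWithinAt (fun s => ξ + Y s - b s) (Set.Ici t) t :=
      (continuousWithinAt_const.add (hY.1 t)).sub (hb.1 t)
    have h : ∀ᶠ r in nhdsWithin t (Set.Ici t), ξ + Y r - b r < c :=
      Filter.Tendsto.eventually_lt_const hc hg
    obtain ⟨w, hw, hsub⟩ := mem_nhdsGE_iff_exists_Ico_subset.mp h
    exact ⟨w, hw, fun r hr => hsub hr⟩
  set S : ℚ → Set ℝ := fun q => {s : ℝ | 0 ≤ s ∧ s < (q:ℝ) ∧ (q:ℝ) ≤ T ∧ l q ≤ l s} with hS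
  set A : ℚ → Set ℝ := fun q => ⋃ s ∈ S q, Set.Ioc s (q:ℝ) with hA
  have hmem : ∀ s : ℝ, 0 < s → s < T → ξ + Y s - b s < l s → ∃ q : ℚ, s ∈ S q := by
    intro s hs0 hsT hgs
    obtain ⟨w, hw, hgw⟩ := hrc s (l s) hgs
    obtain ⟨q, hq1, hq2⟩ := exists_rat_btwn (lt_min hw hsT : s < min w T)
    have hqT : (q:ℝ) ≤ T := (le_min_iff.mp hq2.le).2
    refine ⟨q, hs0.le, hq1, hqT, ?_⟩
    refine hlle (q:ℝ) (hs0.le.trans hq1.le) hqT (l s) ?_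
    intro r hr0 hrq
    rcases le_or_gt r s with hrs | hrs
    · exact hfle s r hr0 hrs hsT.le
    · have hrw : r < w := lt_of_le_of_lt hrq (lt_of_lt_of_le hq2 (min_le_left _ _))
      rw [hfeq r]
      exact max_le (hgw r ⟨hrs.le, hrw⟩).le (hlnn s hs0.le hsT.le)
  have hAnull : ∀ q : ℚ, μ (A q) = 0 := by
    intro q
    rcases Set.eq_empty_or_nonempty (S q) with hSe | hSne
    · simp [hA, hSe]
    · obtain ⟨s0, hs0⟩ := hSne
      have hqT : (q:ℝ) ≤ T := hs0.2.2.1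
      have hbdd : BddBelow (S q) := ⟨0, fun x hx => hx.1⟩
      set t := sInf (S q) with htdef
      have ht0 : 0 ≤ t := le_csInf ⟨s0, hs0⟩ (fun x hx => hx.1)
      have htq : t < (q:ℝ) := lt_of_le_of_lt (csInf_le hbdd hs0) hs0.2.1
      have htT : t ≤ T := htq.le.trans hqT
      have hAeq : A q = Set.Ioc t (q:ℝ) := by
        apply Set.Subset.antisymm
        · intro x hx
          simp only [hA, Set.mem_iUnion] at hx
          obtain ⟨s, hsS, hx1, hx2⟩ := hx
          exact ⟨lt_of_le_of_lt (csInf_le hbdd hsS) hx1, hx2⟩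
        · rintro x ⟨hx1, hx2⟩
          obtain ⟨s, hsS, hsx⟩ := (csInf_lt_iff hbdd ⟨s0, hs0⟩).mp hx1
          simp only [hA, Set.mem_iUnion]
          exact ⟨s, hsS, hsx, hx2⟩
      have hlq : l q ≤ l t := by
        by_cases htS : t ∈ S q
        · exact htS.2.2.2
        · refine le_of_forall_pos_le_add ?_
          intro ε hε
          obtain ⟨w, hw, hgw⟩ := hrc t (ξ + Y t - b t + ε) (by linarith)
          obtain ⟨s, hsS, hsw⟩ := (csInf_lt_iff hbdd ⟨s0, hs0⟩).mp hw
          have hts : t < s := lt_of_le_of_ne (csInf_le hbdd hsS) (fun h => htS (by rw [h]; exact hsS))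
          have hsT' : s ≤ T := hsS.2.1.le.trans hqT
          have hgtle : ξ + Y t - b t ≤ l t := le_trans (hgfle t) (hfle t t ht0 le_rfl htT)
          have h0le : 0 ≤ l t := hlnn t ht0 htT
          have hft : ∀ r, 0 ≤ r → r ≤ s → f r ≤ l t + ε := by
            intro r hr0 hrs
            rcases le_or_gt r t with hrt | hrt
            · exact (hfle t r hr0 hrt htT).trans (by linarith)
            · have hgr := hgw r ⟨hrt.le, lt_of_le_of_lt hrs hsw⟩
              rw [hfeq r]
              exact max_le (by linarith) (by linarith)
          exact (hsS.2.2.2).trans (hlle s (ht0.trans hts.le) hsT' (l t + ε) hft)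
      rw [hAeq, hIoc t (q:ℝ) ht0 htq.le hqT, ENNReal.ofReal_eq_zero]
      linarith
  set E : Set ℝ := {s : ℝ | 0 < s ∧ s ≤ T ∧ ξ + Y s - b s < l s} with hE
  set D : Set ℝ := E \ (⋃ q : ℚ, A q) with hD
  have hDcount : D.Countable := by
    have h1 : (D ∩ Set.Iio T).Countable := by
      have hchoice : ∀ s : ↥(D ∩ Set.Iio T), ∃ q : ℚ, (s:ℝ) ∈ S q := by
        rintro ⟨s, hsD, hsT⟩
        exact hmem s hsD.1.1 hsT hsD.1.2.2
      choose φ hφ using hchoice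
      have hkey : ∀ x y : ↥(D ∩ Set.Iio T), (x:ℝ) < (y:ℝ) → ((φ x : ℚ):ℝ) < ((φ y : ℚ):ℝ) := by
        intro x y hxy
        have hx := hφ x
        have hy := hφ y
        have h1 : ((φ x : ℚ):ℝ) < (y:ℝ) := by
          by_contra hle
          push_neg at hle
          have hmem' : (y:ℝ) ∈ A (φ x) := by
            simp only [hA, Set.mem_iUnion]
            exact ⟨(x:ℝ), hx, hxy, hle⟩
          exact y.2.1.2 (Set.mem_iUnion.mpr ⟨φ x, hmem'⟩)
        exact h1.trans hy.2.1
      have hinj : Function.Injective φ := by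
        intro x y hxy
        rcases lt_trichotomy (x:ℝ) (y:ℝ) with h | h | h
        · have := hkey x y h; rw [hxy] at this; exact absurd this (lt_irrefl _)
        · exact Subtype.ext h
        · have := hkey y x h; rw [hxy] at this; exact absurd this (lt_irrefl _)
      rw [Set.countable_iff_exists_injective]
      exact ⟨fun x => Encodable.encode (φ x),
        fun a b h => hinj (Encodable.encode_injective h)⟩
    have h2 : D ⊆ (D ∩ Set.Iio T) ∪ {T} := by
      intro s hsD
      rcases lt_or_eq_of_le hsD.1.2.1 with h | h
      · exact Or.inl ⟨hsD, h⟩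
      · exact Or.inr (by simp [h])
    exact Set.Countable.mono h2 (h1.union (Set.countable_singleton T))
  have hDnull : μ D = 0 := by
    have hDeq : D = ⋃ s ∈ D, {s} := by simp
    rw [hDeq, measure_biUnion_null_iff hDcount]
    intro s hsD
    exact hsing s hsD.1.1 hsD.1.2.1 hsD.1.2.2
  have hUnull : μ (⋃ q : ℚ, A q) = 0 := measure_iUnion_null hAnull
  have hEnull : μ E = 0 := by
    have hsub : E ⊆ (⋃ q : ℚ, A q) ∪ D := by
      intro s hs
      by_cases h : s ∈ ⋃ q : ℚ, A q
      · exact Or.inl h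
      · exact Or.inr ⟨hs, h⟩
    exact measure_mono_null hsub (measure_union_null hUnull hDnull)
  have hae : (fun s => b s - Xt s) =ᵐ[μ.restrict (Set.Ioc 0 T)] (fun _ => (0:ℝ)) := by
    rw [Filter.EventuallyEq, ae_restrict_iff' measurableSet_Ioc, ae_iff]
    refine measure_mono_null ?_ hEnull
    intro s hs
    simp only [Set.mem_setOf_eq] at hs
    push_neg at hs
    obtain ⟨⟨hs0, hsT⟩, hne'⟩ := hs
    refine ⟨hs0, hsT, ?_⟩
    have h1 := hXle s ⟨hs0.le, hsT⟩
    rw [hXt s] at h1 hne'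
    rcases lt_or_eq_of_le h1 with h | h
    · linarith
    · exact absurd (by linarith) hne'
  refine ⟨hXle, ⟨hmono, hl0⟩, ?_⟩
  calc ∫ s in Set.Ioc (0:ℝ) T, (b s - Xt s) ∂μ
      = ∫ s in Set.Ioc (0:ℝ) T, (0:ℝ) ∂μ := integral_congr_ae hae
    _ = 0 := integral_zero _ _
end

section
/- Let Y : [0, T] → ℝ be a càdlàg path with Y(0) = 0 and b : [0, T] → ℝ a càdlàg barrier, and let X̃(s) = ξ + Y(s) − sup_{0 ≤ r ≤ s}(ξ + Y(r) − b(r))⁺ with ξ ≤ b(0). Suppose Y is continuous at a time t ∈ (0, T], b has a downward jump at t (b(t) < b(t−)), and X̃(t−) > b(t). Then X̃(t) = b(t). -/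
open Filter Set Topology

lemma cadlag_abs_bdd (f : ℝ → ℝ) (hf : Cadlag f) (a c : ℝ) :
    ∃ C : ℝ, ∀ x ∈ Set.Icc a c, |f x| ≤ C := by
  have key : ∀ x : ℝ, ∃ U ∈ 𝓝 x, ∃ C : ℝ, ∀ y ∈ U, |f y| ≤ C := by
    intro x
    have h1 : ∀ᶠ y in 𝓝[Set.Ici x] x, f y ∈ Set.Icc (f x - 1) (f x + 1) :=
      (hf.1 x) (Icc_mem_nhds (by linarith) (by linarith))
    obtain ⟨c', h2'⟩ := hf.2 x
    have h2 : ∀ᶠ y in 𝓝[Set.Iio x] x, f y ∈ Set.Icc (c' - 1) (c' + 1) :=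
      h2' (Icc_mem_nhds (by linarith) (by linarith))
    rw [eventually_iff, mem_nhdsWithin] at h1 h2
    obtain ⟨u, hu_open, hxu, hu⟩ := h1
    obtain ⟨v, hv_open, hxv, hv⟩ := h2
    refine ⟨u ∩ v, (hu_open.inter hv_open).mem_nhds ⟨hxu, hxv⟩,
      max (|f x| + 1) (|c'| + 1), ?_⟩
    intro y hy
    rcases le_or_gt x y with h | h
    · have := hu ⟨hy.1, h⟩
      simp only [Set.mem_setOf_eq, Set.mem_Icc] at this
      refine le_trans ?_ (le_max_left _ _)
      rw [abs_le]
      constructor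
      · have := neg_abs_le (f x); linarith [this]
      · have := le_abs_self (f x); linarith [this]
    · have := hv ⟨hy.2, h⟩
      simp only [Set.mem_setOf_eq, Set.mem_Icc] at this
      refine le_trans ?_ (le_max_right _ _)
      rw [abs_le]
      constructor
      · have := neg_abs_le c'; linarith [this]
      · have := le_abs_self c'; linarith [this]
  choose U hU C hC using key
  obtain ⟨s, -, hs⟩ := (isCompact_Icc : IsCompact (Set.Icc a c)).elim_nhds_subcover U
    (fun x _ => hU x)
  refine ⟨∑ x ∈ s, |C x|, fun y hy => ?_⟩
  obtain ⟨x, hxs, hyx⟩ := Set.mem_iUnion₂.mp (hs hy)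
  calc |f y| ≤ C x := hC x y hyx
    _ ≤ |C x| := le_abs_self _
    _ ≤ ∑ x ∈ s, |C x| := Finset.single_le_sum (f := fun x => |C x|) (fun i _ => abs_nonneg _) hxs

theorem stmt_6 (T : ℝ) (hT : 0 < T) (Y b : ℝ → ℝ)
    (hY : Cadlag Y) (hY0 : Y 0 = 0) (hb : Cadlag b)
    (ξ : ℝ) (hξ : ξ ≤ b 0)
    (Xt : ℝ → ℝ)
    (hXt : ∀ s, Xt s = ξ + Y s - sSup ((fun r => max (ξ + Y r - b r) 0) '' Set.Icc 0 s))
    (t : ℝ) (ht : t ∈ Set.Ioc 0 T)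
    (hYcont : ContinuousAt Y t)
    (bleft : ℝ) (hbleft : Filter.Tendsto b (nhdsWithin t (Set.Iio t)) (nhds bleft))
    (hjump : b t < bleft)
    (Xleft : ℝ) (hXleft : Filter.Tendsto Xt (nhdsWithin t (Set.Iio t)) (nhds Xleft))
    (habove : b t < Xleft) :
    Xt t = b t := by
  set f : ℝ → ℝ := fun r => max (ξ + Y r - b r) 0 with hf_def
  have ht0 : 0 < t := ht.1
  obtain ⟨CY, hCY⟩ := cadlag_abs_bdd Y hY 0 t
  obtain ⟨Cb, hCb⟩ := cadlag_abs_bdd b hb 0 t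
  have hfb : ∀ r ∈ Set.Icc 0 t, f r ≤ max (ξ + CY + Cb) 0 := by
    intro r hr
    have h1 := abs_le.mp (hCY r hr)
    have h2 := abs_le.mp (hCb r hr)
    exact max_le_max (by linarith) le_rfl
  have hub : BddAbove (f '' Set.Icc 0 t) := by
    refine ⟨max (ξ + CY + Cb) 0, ?_⟩
    rintro _ ⟨r, hr, rfl⟩
    exact hfb r hr
  have hub' : BddAbove (f '' Set.Ico 0 t) :=
    hub.mono (Set.image_mono Set.Ico_subset_Icc_self)
  have hubs : ∀ s ∈ Set.Icc 0 t, BddAbove (f '' Set.Icc 0 s) := fun s hs =>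
    hub.mono (Set.image_mono (Set.Icc_subset_Icc le_rfl hs.2))
  have h0mem : (0 : ℝ) ∈ Set.Ico 0 t := ⟨le_rfl, ht0⟩
  set Ml : ℝ := sSup (f '' Set.Ico 0 t) with hMl_def
  have hMl0 : 0 ≤ Ml :=
    le_trans (le_max_right _ _) (le_csSup hub' ⟨0, h0mem, rfl⟩)
  -- the running supremum tends to Ml from the left
  have hMtend : Tendsto (fun s => sSup (f '' Set.Icc 0 s)) (𝓝[Set.Iio t] t) (𝓝 Ml) := by
    rw [tendsto_order]
    constructor
    · intro l hl
      obtain ⟨_, ⟨r, hr, rfl⟩, hlr⟩ := exists_lt_of_lt_csSup ((Set.Nonempty.image f ⟨0, h0mem⟩)) hl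
      have hev : ∀ᶠ s in 𝓝[Set.Iio t] t, s ∈ Set.Ioi r :=
        mem_nhdsWithin_of_mem_nhds (Ioi_mem_nhds hr.2)
      filter_upwards [hev, self_mem_nhdsWithin] with s hs1 hs2
      have hsmem : s ∈ Set.Icc 0 t := ⟨le_trans hr.1 (le_of_lt hs1), le_of_lt hs2⟩
      have : f r ≤ sSup (f '' Set.Icc 0 s) :=
        le_csSup (hubs s hsmem) ⟨r, ⟨hr.1, le_of_lt hs1⟩, rfl⟩
      linarith
    · intro u hu
      have hev : ∀ᶠ s in 𝓝[Set.Iio t] t, s ∈ Set.Ioi (0 : ℝ) :=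
        mem_nhdsWithin_of_mem_nhds (Ioi_mem_nhds ht0)
      filter_upwards [hev, self_mem_nhdsWithin] with s hs1 hs2
      have : sSup (f '' Set.Icc 0 s) ≤ Ml := by
        apply csSup_le_csSup hub' ((Set.Nonempty.image f ⟨0, Set.mem_Icc.mpr ⟨le_rfl, le_of_lt hs1⟩⟩))
        exact Set.image_mono (fun r hr => ⟨hr.1, lt_of_le_of_lt hr.2 hs2⟩)
      linarith
  have hXfun : Xt = fun s => ξ + Y s - sSup (f '' Set.Icc 0 s) := funext hXt
  have hXtend : Tendsto Xt (𝓝[Set.Iio t] t) (𝓝 (ξ + Y t - Ml)) := by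
    rw [hXfun]
    exact (tendsto_const_nhds.add (hYcont.tendsto.mono_left nhdsWithin_le_nhds)).sub hMtend
  have hXl : Xleft = ξ + Y t - Ml := tendsto_nhds_unique hXleft hXtend
  have hkey : Ml < ξ + Y t - b t := by rw [hXl] at habove; linarith
  have hft : f t = ξ + Y t - b t := max_eq_left (by linarith)
  have hgreat : IsGreatest (f '' Set.Icc 0 t) (f t) := by
    constructor
    · exact ⟨t, ⟨le_of_lt ht0, le_rfl⟩, rfl⟩
    · rintro _ ⟨r, hr, rfl⟩
      rcases lt_or_eq_of_le hr.2 with h | h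
      · have : f r ≤ Ml := le_csSup hub' ⟨r, ⟨hr.1, h⟩, rfl⟩
        rw [hft]; linarith
      · rw [h]
  rw [hXt t, show ((fun r => max (ξ + Y r - b r) 0) '' Set.Icc 0 t) = f '' Set.Icc 0 t from rfl,
    hgreat.csSup_eq, hft]
  ring
end

section
/- Let Y : [0, T] → ℝ be a continuous path with Y(0) = 0 and b : [0, T] → ℝ a càdlàg barrier. For 0 ≤ t ≤ T and x ≤ b(t) define the reflected path started at (t, x) by X̃^{t,x}(s) = x + (Y(s) − Y(t)) − sup_{t ≤ r ≤ s}(x + Y(r) − Y(t) − b(r))⁺ for s ∈ [t, T]. Then the flow property holds: for all 0 ≤ t ≤ r ≤ s ≤ T and x ≤ b(t), X̃^{t,x}(s) = X̃^{r, X̃^{t,x}(r)}(s). -/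
open Set Filter

lemma cadlag_bddBelow {b : ℝ → ℝ} (hb : Cadlag b) (a c : ℝ) :
    BddBelow (b '' Set.Icc a c) := by
  refine IsCompact.induction_on (p := fun S => BddBelow (b '' S)) isCompact_Icc ?_ ?_ ?_ ?_
  · simp
  · intro s t hst h
    exact h.mono (Set.image_mono hst)
  · intro s t hs ht
    rw [Set.image_union]
    exact hs.union ht
  · intro x hx
    obtain ⟨L, hL⟩ := hb.2 x
    have h1 : b ⁻¹' Set.Ioi (L - 1) ∈ nhdsWithin x (Set.Iio x) :=
      hL (Ioi_mem_nhds (by linarith))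
    have h2 : b ⁻¹' Set.Ioi (b x - 1) ∈ nhdsWithin x (Set.Ici x) :=
      (hb.1 x) (Ioi_mem_nhds (by linarith))
    refine ⟨b ⁻¹' Set.Ioi (L - 1) ∪ b ⁻¹' Set.Ioi (b x - 1), ?_, ?_⟩
    · apply nhdsWithin_le_nhds
      have : nhdsWithin x (Set.Iio x ∪ Set.Ici x) = nhds x := by
        rw [Set.Iio_union_Ici, nhdsWithin_univ]
      rw [← this, nhdsWithin_union]
      exact Filter.union_mem_sup h1 h2
    · refine ⟨min (L - 1) (b x - 1), ?_⟩
      rintro y ⟨u, hu | hu, rfl⟩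
      · exact le_trans (min_le_left _ _) (le_of_lt hu)
      · exact le_trans (min_le_right _ _) (le_of_lt hu)

theorem stmt_7 (T : ℝ) (hT : 0 ≤ T) (Y b : ℝ → ℝ)
    (hY : Continuous Y) (hY0 : Y 0 = 0) (hb : Cadlag b)
    (Xt : ℝ → ℝ → ℝ → ℝ)
    (hXt : ∀ t x s, Xt t x s =
      x + (Y s - Y t) - sSup ((fun r => max (x + Y r - Y t - b r) 0) '' Set.Icc t s)) :
    ∀ t r s x, 0 ≤ t → t ≤ r → r ≤ s → s ≤ T → x ≤ b t →
      Xt t x s = Xt r (Xt t x r) s := by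
  intro t r s x ht htr hrs hsT hxb
  set g : ℝ → ℝ := fun u => max (x + Y u - Y t - b u) 0 with hg
  -- boundedness of g on any Icc
  have hbddg : ∀ a c : ℝ, BddAbove (g '' Set.Icc a c) := by
    intro a c
    obtain ⟨MY, hMY⟩ := (isCompact_Icc.image hY).bddAbove
    obtain ⟨mb, hmb⟩ := cadlag_bddBelow hb a c
    refine ⟨max (x + MY - Y t - mb) 0, ?_⟩
    rintro y ⟨u, hu, rfl⟩
    have h1 : Y u ≤ MY := hMY ⟨u, hu, rfl⟩
    have h2 : mb ≤ b u := hmb ⟨u, hu, rfl⟩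
    exact max_le_max (by linarith) le_rfl
  set A := sSup (g '' Set.Icc t r) with hA
  set C := sSup (g '' Set.Icc r s) with hC
  have hne1 : (g '' Set.Icc t r).Nonempty := (Set.nonempty_Icc.2 htr).image g
  have hne2 : (g '' Set.Icc r s).Nonempty := (Set.nonempty_Icc.2 hrs).image g
  -- A ≥ 0
  have hA0 : 0 ≤ A := by
    have : g t ≤ A := le_csSup (hbddg t r) ⟨t, ⟨le_rfl, htr⟩, rfl⟩
    exact le_trans (le_max_right _ _) this
  -- split the sup
  have hsplit : sSup (g '' Set.Icc t s) = max A C := by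
    rw [← Set.Icc_union_Icc_eq_Icc htr hrs, Set.image_union]
    exact csSup_union (hbddg t r) hne1 (hbddg r s) hne2
  -- value at time r
  have hXtr : Xt t x r = x + Y r - Y t - A := by
    have h0 : Xt t x r = x + (Y r - Y t) - A := by rw [hXt]
    rw [h0]; ring
  -- compute inner function
  have hfun : (fun u => max (Xt t x r + Y u - Y r - b u) 0) '' Set.Icc r s
      = (fun y => y - A) '' ((fun y => max y A) '' (g '' Set.Icc r s)) := by
    rw [← Set.image_comp, ← Set.image_comp]
    apply Set.image_congr
    intro u _
    simp only [Function.comp, hXtr, hg]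
    rcases le_total (x + Y u - Y t - b u) 0 with h | h
    · rw [max_eq_right h, max_eq_right hA0]
      have : x + Y r - Y t - A + Y u - Y r - b u ≤ 0 := by linarith
      rw [max_eq_right this]; ring
    · rw [max_eq_left h]
      rcases le_total (x + Y u - Y t - b u) A with h2 | h2
      · rw [max_eq_right h2]
        have : x + Y r - Y t - A + Y u - Y r - b u ≤ 0 := by linarith
        rw [max_eq_right this]; ring
      · rw [max_eq_left h2]
        have : 0 ≤ x + Y r - Y t - A + Y u - Y r - b u := by linarith
        rw [max_eq_left this]; ring
  have hB : sSup ((fun u => max (Xt t x r + Y u - Y r - b u) 0) '' Set.Icc r s)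
      = max C A - A := by
    rw [hfun]
    have hmax : sSup ((fun y => max y A) '' (g '' Set.Icc r s)) = max C A := by
      rw [← Monotone.map_csSup_of_continuousAt (f := fun y => max y A)
        (by fun_prop) (fun _ _ h => max_le_max h le_rfl) hne2 (hbddg r s)]
    have hne3 : ((fun y => max y A) '' (g '' Set.Icc r s)).Nonempty := hne2.image _
    have hbdd3 : BddAbove ((fun y => max y A) '' (g '' Set.Icc r s)) := by
      obtain ⟨M, hM⟩ := hbddg r s
      refine ⟨max M A, ?_⟩
      rintro y ⟨z, hz, rfl⟩
      exact max_le_max (hM hz) le_rfl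
    rw [← Monotone.map_csSup_of_continuousAt (f := fun y => y - A)
      (by fun_prop) (fun _ _ h => by simpa using h) hne3 hbdd3, hmax]
  rw [hXt r, hB, hXtr, hXt t x s, ← hg, hsplit]
  rcases le_total A C with h | h
  · rw [max_eq_right h, max_eq_left h]; ring
  · rw [max_eq_left h, max_eq_right h]; ring
end
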